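/- Let 0 ≤ α₁ ≤ α₂ ≤ 1 and let {Q_j}_{j∈J} and {P_i}_{i∈I} be families of measurable subsets of ℝ^d, each an admissible covering (union equal to ℝ^d, each member intersecting at most n₀ others) such that there exist constants κ ≥ 1, K ≥ 1 with: κ^{-1}⟨x⟩^{α₁ d} ≤ μ(Q_j) ≤ κ⟨x⟩^{α₁ d} for all x ∈ Q_j, κ^{-1}⟨x⟩^{α₂ d} ≤ μ(P_i) ≤ κ⟨x⟩^{α₂ d} for all x ∈ P_i, and each Q_j (resp. P_i) contains a ball of radius r and is contained in a ball of radius R with R/r ≤ K. Fix η_j ∈ Q_j and ξ_i ∈ P_i. Then for Λ_j = {i ∈ I : Q_j ∩ P_i ≠ ∅}, there is a constant c such that |Λ_j| ≤ c for all j ∈ J, and moreover ⟨ξ_i⟩ ≍ ⟨η_j⟩ whenever Q_j ∩ P_i ≠ ∅. -/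

import Mathlib

open MeasureTheory

/-- Japanese bracket ⟨x⟩ = (1+|x|²)^(1/2). -/
noncomputable def jb {d : ℕ} (x : EuclideanSpace ℝ (Fin d)) : ℝ :=
  (1 + ‖x‖ ^ 2) ^ ((1 : ℝ) / 2)

open ENNReal Metric

lemma jb_sq {d : ℕ} (x : EuclideanSpace ℝ (Fin d)) : jb x ^ 2 = 1 + ‖x‖ ^ 2 := by
  rw [jb, ← Real.rpow_natCast ((1 + ‖x‖ ^ 2) ^ ((1:ℝ)/2)) 2, ← Real.rpow_mul (by positivity)]
  norm_num

lemma one_le_jb {d : ℕ} (x : EuclideanSpace ℝ (Fin d)) : 1 ≤ jb x := by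
  rw [jb]
  calc (1:ℝ) = 1 ^ ((1:ℝ)/2) := (Real.one_rpow _).symm
  _ ≤ _ := Real.rpow_le_rpow (by norm_num) (by nlinarith [sq_nonneg ‖x‖]) (by norm_num)

lemma jb_pos {d : ℕ} (x : EuclideanSpace ℝ (Fin d)) : 0 < jb x :=
  lt_of_lt_of_le one_pos (one_le_jb x)

lemma norm_le_jb {d : ℕ} (x : EuclideanSpace ℝ (Fin d)) : ‖x‖ ≤ jb x := by
  rw [← pow_le_pow_iff_left₀ (norm_nonneg x) (jb_pos x).le two_ne_zero, jb_sq]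
  linarith

lemma jb_le_add {d : ℕ} (x y : EuclideanSpace ℝ (Fin d)) : jb x ≤ jb y + dist x y := by
  rw [← pow_le_pow_iff_left₀ (jb_pos x).le (by have := jb_pos y; have := dist_nonneg (x := x) (y := y); linarith) two_ne_zero, jb_sq, add_sq, jb_sq]
  have hn : ‖x‖ ≤ ‖y‖ + dist x y := by
    have := norm_sub_norm_le x y
    rw [dist_eq_norm]; linarith
  nlinarith [norm_le_jb y, dist_nonneg (x := x) (y := y), norm_nonneg x, norm_nonneg y]

/-- volume of the unit closed ball. -/
noncomputable def cball (d : ℕ) : ℝ :=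
  (volume (Metric.closedBall (0 : EuclideanSpace ℝ (Fin d)) 1)).toReal

lemma cball_pos (d : ℕ) : 0 < cball d :=
  ENNReal.toReal_pos (measure_closedBall_pos _ _ one_pos).ne' measure_closedBall_lt_top.ne

lemma vol_closedBall {d : ℕ} (a : EuclideanSpace ℝ (Fin d)) {r : ℝ} (hr : 0 ≤ r) :
    (volume (closedBall a r)).toReal = r ^ d * cball d := by
  rw [Measure.addHaar_closedBall' volume a hr, finrank_euclideanSpace_fin,
    ENNReal.toReal_mul, ENNReal.toReal_ofReal (by positivity), cball]

lemma vol_ne_top {d : ℕ} {S : Set (EuclideanSpace ℝ (Fin d))} {b : EuclideanSpace ℝ (Fin d)}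
    {R : ℝ} (h2 : S ⊆ closedBall b R) : volume S ≠ ⊤ :=
  ((measure_mono h2).trans_lt measure_closedBall_lt_top).ne

lemma rho_bound {d : ℕ} (hd : 0 < d) {κ α : ℝ} (hκ : 0 < κ) (hα : 0 ≤ α)
    {S : Set (EuclideanSpace ℝ (Fin d))} {a b : EuclideanSpace ℝ (Fin d)} {ρ R : ℝ}
    (hρ : 0 < ρ) (h1 : closedBall a ρ ⊆ S) (h2 : S ⊆ closedBall b R)
    {y : EuclideanSpace ℝ (Fin d)} (hμ : (volume S).toReal ≤ κ * jb y ^ (α * (d:ℝ))) :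
    ρ ≤ (κ / cball d) ^ (1/(d:ℝ)) * jb y ^ α := by
  have hcd := cball_pos d
  have hjb := jb_pos y
  have hdR : (0:ℝ) < d := by exact_mod_cast hd
  have h3 : ρ ^ d * cball d ≤ (volume S).toReal := by
    rw [← vol_closedBall a hρ.le]
    exact ENNReal.toReal_mono (vol_ne_top h2) (measure_mono h1)
  have h4 : ρ ^ (d:ℝ) ≤ κ * jb y ^ (α * (d:ℝ)) / cball d := by
    rw [Real.rpow_natCast]
    rw [le_div_iff₀ hcd]
    linarith
  calc ρ = (ρ ^ (d:ℝ)) ^ (1/(d:ℝ)) := by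
        rw [← Real.rpow_mul hρ.le, mul_one_div, div_self hdR.ne', Real.rpow_one]
  _ ≤ (κ * jb y ^ (α * (d:ℝ)) / cball d) ^ (1/(d:ℝ)) :=
        Real.rpow_le_rpow (Real.rpow_nonneg hρ.le _) h4 (by positivity)
  _ = (κ / cball d) ^ (1/(d:ℝ)) * jb y ^ α := by
        rw [show κ * jb y ^ (α * (d:ℝ)) / cball d = (κ / cball d) * jb y ^ (α * (d:ℝ)) by ring,
          Real.mul_rpow (by positivity) (by positivity), ← Real.rpow_mul hjb.le]
        congr 2
        field_simp

lemma jb_comp {d : ℕ} (hd : 0 < d) {K κ α : ℝ} (hK : 1 ≤ K) (hκ : 1 ≤ κ)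
    (hα0 : 0 ≤ α) (hα1 : α ≤ 1)
    {S : Set (EuclideanSpace ℝ (Fin d))} {a b : EuclideanSpace ℝ (Fin d)} {ρ R : ℝ}
    (hρ : 0 < ρ) (h1 : closedBall a ρ ⊆ S) (h2 : S ⊆ closedBall b R) (hR : R ≤ K * ρ)
    (hμ : ∀ x ∈ S, (volume S).toReal ≤ κ * jb x ^ (α * (d:ℝ)))
    {x y : EuclideanSpace ℝ (Fin d)} (hx : x ∈ S) (hy : y ∈ S) :
    jb x ≤ (1 + 2*K*((κ / cball d) ^ (1/(d:ℝ)))) * jb y := by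
  set M := (κ / cball d) ^ (1/(d:ℝ)) with hMdef
  have hM : 0 ≤ M := Real.rpow_nonneg (by have := cball_pos d; positivity) _
  have hρM : ρ ≤ M * jb y ^ α := rho_bound hd (by linarith) hα0 hρ h1 h2 (hμ y hy)
  have hdxy : dist x y ≤ 2 * R := by
    calc dist x y ≤ dist x b + dist b y := dist_triangle x b y
    _ ≤ R + R := by
        have hxb := h2 hx; have hyb := h2 hy
        rw [mem_closedBall] at hxb hyb
        rw [dist_comm b y]; linarith
    _ = 2 * R := by ring
  have hja : jb y ^ α ≤ jb y := by
    calc jb y ^ α ≤ jb y ^ (1:ℝ) := Real.rpow_le_rpow_of_exponent_le (one_le_jb y) hα1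
    _ = jb y := Real.rpow_one _
  have h5 := jb_le_add x y
  have hjy := jb_pos y
  have h6 : dist x y ≤ 2*K*M*jb y := by
    calc dist x y ≤ 2*R := hdxy
    _ ≤ 2*(K*ρ) := by linarith
    _ ≤ 2*(K*(M*jb y ^ α)) := by
        have : K * ρ ≤ K * (M * jb y ^ α) := mul_le_mul_of_nonneg_left hρM (by linarith)
        linarith
    _ ≤ 2*(K*(M*jb y)) := by
        have : M * jb y ^ α ≤ M * jb y := mul_le_mul_of_nonneg_left hja hM
        nlinarith
    _ = 2*K*M*jb y := by ring
  nlinarith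


/-- If {Q_j} is an α₁-covering and {P_i} an α₂-covering (0 ≤ α₁ ≤ α₂ ≤ 1), with
points η_j ∈ Q_j, ξ_i ∈ P_i, then |Λ_j| = |{i : Q_j ∩ P_i ≠ ∅}| ≤ c uniformly, and
⟨ξ_i⟩ ≍ ⟨η_j⟩ whenever Q_j ∩ P_i ≠ ∅. -/
theorem stmt10 {d n₀ : ℕ} {J I : Type*} [Countable J] [Countable I]
    (α₁ α₂ κ K : ℝ) (h1 : 0 ≤ α₁) (h2 : α₁ ≤ α₂) (h3 : α₂ ≤ 1) (hκ : 1 ≤ κ) (hK : 1 ≤ K)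
    (Q : J → Set (EuclideanSpace ℝ (Fin d))) (P : I → Set (EuclideanSpace ℝ (Fin d)))
    (η : J → EuclideanSpace ℝ (Fin d)) (ξ : I → EuclideanSpace ℝ (Fin d))
    (hQm : ∀ j, MeasurableSet (Q j)) (hPm : ∀ i, MeasurableSet (P i))
    (hQcov : ⋃ j, Q j = Set.univ) (hPcov : ⋃ i, P i = Set.univ)
    (hQadm : ∀ j, {j' | (Q j ∩ Q j').Nonempty}.encard ≤ n₀)
    (hPadm : ∀ i, {i' | (P i ∩ P i').Nonempty}.encard ≤ n₀)
    (hQμ : ∀ j, ∀ x ∈ Q j, κ⁻¹ * jb x ^ (α₁ * d) ≤ (volume (Q j)).toReal ∧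
        (volume (Q j)).toReal ≤ κ * jb x ^ (α₁ * d))
    (hPμ : ∀ i, ∀ x ∈ P i, κ⁻¹ * jb x ^ (α₂ * d) ≤ (volume (P i)).toReal ∧
        (volume (P i)).toReal ≤ κ * jb x ^ (α₂ * d))
    (hQball : ∀ j, ∃ (a b : EuclideanSpace ℝ (Fin d)) (ρ R : ℝ), 0 < ρ ∧
        Metric.closedBall a ρ ⊆ Q j ∧ Q j ⊆ Metric.closedBall b R ∧ R ≤ K * ρ)
    (hPball : ∀ i, ∃ (a b : EuclideanSpace ℝ (Fin d)) (ρ R : ℝ), 0 < ρ ∧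
        Metric.closedBall a ρ ⊆ P i ∧ P i ⊆ Metric.closedBall b R ∧ R ≤ K * ρ)
    (hη : ∀ j, η j ∈ Q j) (hξ : ∀ i, ξ i ∈ P i) :
    (∃ c : ℕ, ∀ j, {i | (Q j ∩ P i).Nonempty}.encard ≤ c) ∧
    (∃ C : ℝ, 1 ≤ C ∧ ∀ j i, (Q j ∩ P i).Nonempty →
        C⁻¹ * jb (η j) ≤ jb (ξ i) ∧ jb (ξ i) ≤ C * jb (η j)) := by
  
  classical
  rcases Nat.eq_zero_or_pos d with hd0 | hd
  · -- degenerate case d = 0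
    subst hd0
    constructor
    · refine ⟨n₀, fun j => ?_⟩
      by_cases hQe : (Q j).Nonempty
      · obtain ⟨p, hp⟩ := hQe
        have hpu : p ∈ ⋃ i, P i := by rw [hPcov]; trivial
        obtain ⟨i₀, hi₀⟩ := Set.mem_iUnion.mp hpu
        refine le_trans (Set.encard_mono ?_) (hPadm i₀)
        rintro i ⟨z, _, hzP⟩
        exact ⟨p, hi₀, (Subsingleton.elim z p) ▸ hzP⟩
      · have he : {i | (Q j ∩ P i).Nonempty} = ∅ := by
          ext i
          simp only [Set.mem_setOf_eq, Set.mem_empty_iff_false, iff_false]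
          rintro ⟨z, hz, -⟩
          exact hQe ⟨z, hz⟩
        simp [he]
    · refine ⟨1, le_refl 1, fun j i _ => ?_⟩
      rw [Subsingleton.elim (ξ i) (η j)]
      norm_num
  · -- main case d ≥ 1
    have hα₂0 : 0 ≤ α₂ := h1.trans h2
    have hκ0 : (0:ℝ) < κ := by linarith
    set M : ℝ := (κ / cball d) ^ (1/(d:ℝ)) with hMdef
    have hM0 : 0 ≤ M := Real.rpow_nonneg (by have := cball_pos d; positivity) _
    set C₁ : ℝ := 1 + 2*K*M with hC₁def
    have hC₁1 : 1 ≤ C₁ := by nlinarith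
    have hC₁0 : 0 < C₁ := by linarith
    have claimQ : ∀ j, ∀ x ∈ Q j, ∀ y ∈ Q j, jb x ≤ C₁ * jb y := by
      intro j x hx y hy
      obtain ⟨a, b, ρ, R, hρ, hs1, hs2, hsR⟩ := hQball j
      exact jb_comp hd hK hκ h1 (h2.trans h3) hρ hs1 hs2 hsR
        (fun z hz => (hQμ j z hz).2) hx hy
    have claimP : ∀ i, ∀ x ∈ P i, ∀ y ∈ P i, jb x ≤ C₁ * jb y := by
      intro i x hx y hy
      obtain ⟨a, b, ρ, R, hρ, hs1, hs2, hsR⟩ := hPball i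
      exact jb_comp hd hK hκ hα₂0 h3 hρ hs1 hs2 hsR
        (fun z hz => (hPμ i z hz).2) hx hy
    constructor
    · -- cardinality bound
      set A : ℝ := 4*K*M*C₁ with hAdef
      have hA0 : 0 ≤ A := by positivity
      set B : ℝ := (n₀:ℝ) * (A^d * cball d) * ((C₁^2) ^ (α₂*(d:ℝ)) * κ) with hBdef
      refine ⟨⌈B⌉₊, fun j => ?_⟩
      by_contra hcon
      push_neg at hcon
      have hk : ((⌈B⌉₊ + 1 : ℕ) : ℕ∞) ≤ {i | (Q j ∩ P i).Nonempty}.encard := by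
        push_cast
        exact Order.add_one_le_of_lt hcon
      obtain ⟨t, hts, htcard⟩ := Set.exists_subset_encard_eq hk
      have htfin : t.Finite := Set.finite_of_encard_eq_coe htcard
      set s : Finset I := htfin.toFinset with hsdef
      have hscard : s.card = ⌈B⌉₊ + 1 := by
        have := htfin.encard_eq_coe_toFinset_card
        rw [htcard] at this
        exact_mod_cast this.symm
      have hsmem : ∀ i ∈ s, (Q j ∩ P i).Nonempty := by
        intro i hi
        exact hts (htfin.mem_toFinset.mp hi)
      -- geometric data
      set T : ℝ := jb (η j) ^ (α₂*(d:ℝ)) with hTdef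
      have hT0 : 0 < T := Real.rpow_pos_of_pos (jb_pos _) _
      set D : ℝ := (C₁^2) ^ (α₂*(d:ℝ)) with hDdef
      have hD0 : 0 < D := Real.rpow_pos_of_pos (by positivity) _
      set m : ℝ := κ⁻¹ * (T / D) with hmdef
      have hm0 : 0 < m := mul_pos (inv_pos.mpr hκ0) (div_pos hT0 hD0)
      set ℓ : ℝ := A * jb (η j) ^ α₂ with hℓdef
      have hℓ0 : 0 ≤ ℓ := mul_nonneg hA0 (Real.rpow_nonneg (jb_pos _).le _)
      obtain ⟨aQ, bQ, ρQ, RQ, hρQ, hQ1, hQ2, hQR⟩ := hQball j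
      have hρQle : ρQ ≤ M * jb (η j) ^ α₂ := by
        calc ρQ ≤ M * jb (η j) ^ α₁ :=
              rho_bound hd hκ0 h1 hρQ hQ1 hQ2 (hQμ j (η j) (hη j)).2
        _ ≤ M * jb (η j) ^ α₂ :=
              mul_le_mul_of_nonneg_left
                (Real.rpow_le_rpow_of_exponent_le (one_le_jb _) h2) hM0
      have key : ∀ i ∈ s, P i ⊆ closedBall (η j) ℓ ∧ ENNReal.ofReal m ≤ volume (P i) := by
        intro i hi
        obtain ⟨x₀, hx₀Q, hx₀P⟩ := hsmem i hi
        obtain ⟨aP, bP, ρP, RP, hρP, hP1, hP2, hPR⟩ := hPball i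
        have hρPle : ρP ≤ M * (C₁ * jb (η j) ^ α₂) := by
          calc ρP ≤ M * jb x₀ ^ α₂ :=
                rho_bound hd hκ0 hα₂0 hρP hP1 hP2 (hPμ i x₀ hx₀P).2
          _ ≤ M * (C₁ * jb (η j) ^ α₂) := by
              refine mul_le_mul_of_nonneg_left ?_ hM0
              calc jb x₀ ^ α₂ ≤ (C₁ * jb (η j)) ^ α₂ :=
                    Real.rpow_le_rpow (jb_pos x₀).le
                      (claimQ j x₀ hx₀Q (η j) (hη j)) hα₂0
              _ = C₁ ^ α₂ * jb (η j) ^ α₂ :=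
                    Real.mul_rpow hC₁0.le (jb_pos _).le
              _ ≤ C₁ * jb (η j) ^ α₂ := by
                    refine mul_le_mul_of_nonneg_right ?_
                      (Real.rpow_nonneg (jb_pos _).le _)
                    calc C₁ ^ α₂ ≤ C₁ ^ (1:ℝ) :=
                          Real.rpow_le_rpow_of_exponent_le hC₁1 h3
                    _ = C₁ := Real.rpow_one _
        constructor
        · -- P i ⊆ big ball
          intro y hy
          rw [mem_closedBall]
          have hd1 : dist y x₀ ≤ 2 * RP := by
            calc dist y x₀ ≤ dist y bP + dist bP x₀ := dist_triangle _ _ _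
            _ ≤ RP + RP := by
                have hy' := hP2 hy; have hx' := hP2 hx₀P
                rw [mem_closedBall] at hy' hx'
                rw [dist_comm bP x₀]; linarith
            _ = 2 * RP := by ring
          have hd2 : dist x₀ (η j) ≤ 2 * RQ := by
            calc dist x₀ (η j) ≤ dist x₀ bQ + dist bQ (η j) := dist_triangle _ _ _
            _ ≤ RQ + RQ := by
                have hy' := hQ2 hx₀Q; have hx' := hQ2 (hη j)
                rw [mem_closedBall] at hy' hx'
                rw [dist_comm bQ (η j)]; linarith
            _ = 2 * RQ := by ring
          have hRP : RP ≤ K * (M * (C₁ * jb (η j) ^ α₂)) :=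
            hPR.trans (mul_le_mul_of_nonneg_left hρPle (by linarith))
          have hRQ : RQ ≤ K * (M * jb (η j) ^ α₂) :=
            hQR.trans (mul_le_mul_of_nonneg_left hρQle (by linarith))
          have hjb2 : 0 ≤ jb (η j) ^ α₂ := Real.rpow_nonneg (jb_pos _).le _
          calc dist y (η j) ≤ dist y x₀ + dist x₀ (η j) := dist_triangle _ _ _
          _ ≤ 2 * RP + 2 * RQ := by linarith
          _ ≤ 2 * (K * (M * (C₁ * jb (η j) ^ α₂))) + 2 * (K * (M * jb (η j) ^ α₂)) := by
              linarith
          _ ≤ ℓ := by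
              rw [hℓdef, hAdef]
              nlinarith [mul_nonneg (mul_nonneg (by linarith : (0:ℝ) ≤ K) hM0) hjb2]
        · -- lower measure bound
          rw [ENNReal.ofReal_le_iff_le_toReal (vol_ne_top hP2)]
          have hlow := (hPμ i (ξ i) (hξ i)).1
          have hξη : jb (η j) / C₁^2 ≤ jb (ξ i) := by
            rw [div_le_iff₀ (by positivity)]
            calc jb (η j) ≤ C₁ * jb x₀ := claimQ j (η j) (hη j) x₀ hx₀Q
            _ ≤ C₁ * (C₁ * jb (ξ i)) :=
                mul_le_mul_of_nonneg_left (claimP i x₀ hx₀P (ξ i) (hξ i)) hC₁0.le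
            _ = jb (ξ i) * C₁^2 := by ring
          have hr : T / D ≤ jb (ξ i) ^ (α₂*(d:ℝ)) := by
            rw [hTdef, hDdef, ← Real.div_rpow (jb_pos _).le (by positivity)]
            exact Real.rpow_le_rpow (div_nonneg (jb_pos _).le (by positivity)) hξη (by positivity)
          calc m = κ⁻¹ * (T / D) := hmdef
          _ ≤ κ⁻¹ * jb (ξ i) ^ (α₂*(d:ℝ)) :=
              mul_le_mul_of_nonneg_left hr (by positivity)
          _ ≤ (volume (P i)).toReal := hlow
      -- summation
      have hsum1 : (s.card : ℝ≥0∞) * ENNReal.ofReal m ≤ ∑ i ∈ s, volume (P i) := by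
        rw [← nsmul_eq_mul]
        exact Finset.card_nsmul_le_sum s _ _ (fun i hi => (key i hi).2)
      have hsum2 : ∑ i ∈ s, volume (P i) ≤ (n₀:ℝ≥0∞) * volume (closedBall (η j) ℓ) := by
        calc ∑ i ∈ s, volume (P i)
            = ∫⁻ x, ∑ i ∈ s, (P i).indicator (fun _ => (1:ℝ≥0∞)) x ∂volume := by
              rw [lintegral_finset_sum _ (fun i _ => measurable_const.indicator (hPm i))]
              refine Finset.sum_congr rfl (fun i _ => ?_)
              rw [lintegral_indicator_const (hPm i), one_mul]
        _ ≤ ∫⁻ x, (closedBall (η j) ℓ).indicator (fun _ => (n₀:ℝ≥0∞)) x ∂volume := by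
              refine lintegral_mono (fun x => ?_)
              by_cases hx : x ∈ closedBall (η j) ℓ
              · rw [Set.indicator_of_mem hx]
                have hsum : ∑ i ∈ s, (P i).indicator (fun _ => (1:ℝ≥0∞)) x
                    = ((s.filter (fun i => x ∈ P i)).card : ℝ≥0∞) := by
                  simp only [Set.indicator_apply]
                  rw [Finset.sum_boole]
                rw [hsum]
                rcases (s.filter (fun i => x ∈ P i)).eq_empty_or_nonempty with he | hne
                · simp [he]
                · obtain ⟨i₀, hi₀⟩ := hne
                  have hxi₀ : x ∈ P i₀ := (Finset.mem_filter.mp hi₀).2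
                  have hsubs : (↑(s.filter (fun i => x ∈ P i)) : Set I)
                      ⊆ {i' | (P i₀ ∩ P i').Nonempty} := by
                    intro i hi
                    exact ⟨x, hxi₀, (Finset.mem_filter.mp hi).2⟩
                  have hle := (Set.encard_mono hsubs).trans (hPadm i₀)
                  rw [Set.encard_coe_eq_coe_finsetCard] at hle
                  exact (Nat.cast_le (α := ℝ≥0∞)).mpr (Nat.cast_le.mp hle)
              · rw [Set.indicator_of_notMem hx]
                rw [Finset.sum_eq_zero]
                intro i hi
                exact Set.indicator_of_notMem (fun h => hx ((key i hi).1 h)) _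
        _ = (n₀:ℝ≥0∞) * volume (closedBall (η j) ℓ) := by
              rw [lintegral_indicator_const measurableSet_closedBall]
      have hfin : (n₀:ℝ≥0∞) * volume (closedBall (η j) ℓ) ≠ ⊤ :=
        ENNReal.mul_ne_top (by simp) measure_closedBall_lt_top.ne
      have hmain := ENNReal.toReal_mono hfin (hsum1.trans hsum2)
      rw [ENNReal.toReal_mul, ENNReal.toReal_mul, ENNReal.toReal_ofReal hm0.le,
        ENNReal.toReal_natCast, ENNReal.toReal_natCast, vol_closedBall _ hℓ0] at hmain
      -- hmain : s.card * m ≤ n₀ * (ℓ^d * cball d)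
      have h7 : (jb (η j) ^ α₂) ^ d = T := by
        rw [hTdef, ← Real.rpow_natCast (jb (η j) ^ α₂) d, ← Real.rpow_mul (jb_pos _).le]
      have hBm : (n₀:ℝ) * (ℓ^d * cball d) = B * m := by
        rw [hℓdef, mul_pow, h7, hBdef, hmdef]
        field_simp
      have hcard : (s.card:ℝ) ≤ B := by
        rw [hBm] at hmain
        exact le_of_mul_le_mul_right hmain hm0
      have : (s.card:ℝ) ≤ (⌈B⌉₊:ℝ) := hcard.trans (Nat.le_ceil B)
      have hfin2 : s.card ≤ ⌈B⌉₊ := by exact_mod_cast this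
      omega
    · -- comparability
      refine ⟨C₁^2, one_le_pow₀ hC₁1, fun j i hne => ?_⟩
      obtain ⟨x₀, hx₀Q, hx₀P⟩ := hne
      have e1 : jb (ξ i) ≤ C₁ * jb x₀ := claimP i (ξ i) (hξ i) x₀ hx₀P
      have e2 : jb x₀ ≤ C₁ * jb (η j) := claimQ j x₀ hx₀Q (η j) (hη j)
      have e3 : jb (η j) ≤ C₁ * jb x₀ := claimQ j (η j) (hη j) x₀ hx₀Q
      have e4 : jb x₀ ≤ C₁ * jb (ξ i) := claimP i x₀ hx₀P (ξ i) (hξ i)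
      constructor
      · rw [inv_mul_le_iff₀ (by positivity)]
        calc jb (η j) ≤ C₁ * jb x₀ := e3
        _ ≤ C₁ * (C₁ * jb (ξ i)) := mul_le_mul_of_nonneg_left e4 hC₁0.le
        _ = C₁^2 * jb (ξ i) := by ring
      · calc jb (ξ i) ≤ C₁ * jb x₀ := e1
        _ ≤ C₁ * (C₁ * jb (η j)) := mul_le_mul_of_nonneg_left e2 hC₁0.le
        _ = C₁^2 * jb (η j) := by ring
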